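/- For a measure μ supported on a compact set F ⊆ ℝ^d and θ ∈ (0,1), the Assouad spectrum of μ satisfies (upper box dimension of μ) ≤ dim_A^θ μ ≤ (upper box dimension of μ)/(1−θ). -/

import Mathlib

open Filter MeasureTheory
open scoped Topology ENNReal

/-- The support of a measure: points all of whose balls have positive measure. -/
def measSupport {X : Type*} [PseudoMetricSpace X] [MeasurableSpace X]
    (μ : Measure X) : Set X :=
  {x | ∀ r : ℝ, 0 < r → μ (Metric.ball x r) ≠ 0}

/-- The upper box dimension of a measure. -/
noncomputable def measUpperBoxDim {X : Type*} [PseudoMetricSpace X] [MeasurableSpace X]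
    (μ : Measure X) : ℝ :=
  sInf {a : ℝ | 0 ≤ a ∧ ∃ C : ℝ, 0 < C ∧ ∀ x ∈ measSupport μ, ∀ r : ℝ, 0 < r →
    ENNReal.ofReal r < EMetric.diam (measSupport μ) →
    ENNReal.ofReal (C * r ^ a) ≤ μ (Metric.closedBall x r)}

/-- The Assouad spectrum of a measure at parameter `θ`. -/
noncomputable def measAssouadSpectrum {X : Type*} [PseudoMetricSpace X] [MeasurableSpace X]
    (μ : Measure X) (θ : ℝ) : ℝ :=
  sInf {s : ℝ | 0 ≤ s ∧ ∃ C : ℝ, 0 < C ∧ ∀ x ∈ measSupport μ, ∀ r : ℝ, 0 < r →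
    ENNReal.ofReal r < EMetric.diam (measSupport μ) →
    μ (Metric.closedBall x (r ^ θ)) ≤
      ENNReal.ofReal (C * (r ^ θ / r) ^ s) * μ (Metric.closedBall x r)}

section AuxLemmas

open Metric

variable {X : Type*} [PseudoMetricSpace X] [MeasurableSpace X] {μ : Measure X}

lemma isClosed_measSupport (μ : Measure X) : IsClosed (measSupport μ) := by
  rw [← isOpen_compl_iff, Metric.isOpen_iff]
  intro x hx
  simp only [measSupport, Set.mem_compl_iff, Set.mem_setOf_eq, not_forall] at hx
  obtain ⟨r, hr, hμ⟩ := hx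
  rw [not_not] at hμ
  refine ⟨r / 2, by linarith, fun y hy => ?_⟩
  simp only [measSupport, Set.mem_compl_iff, Set.mem_setOf_eq, not_forall]
  refine ⟨r / 2, by linarith, ?_⟩
  rw [not_not]
  refine measure_mono_null (fun z hz => ?_) hμ
  rw [mem_ball] at *
  have := dist_triangle z y x
  linarith

lemma exists_uniform_mass (hS : IsCompact (measSupport μ)) {r₀ : ℝ} (h : 0 < r₀) :
    ∃ m : ℝ, 0 < m ∧ m ≤ 1 ∧ ∀ x ∈ measSupport μ, ENNReal.ofReal m ≤ μ (closedBall x r₀) := by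
  rcases Set.eq_empty_or_nonempty (measSupport μ) with he | hne
  · exact ⟨1, one_pos, le_refl _, by simp [he]⟩
  obtain ⟨t, htS, hcov⟩ := hS.elim_nhds_subcover (fun y => ball y (r₀ / 2))
      (fun y _ => ball_mem_nhds y (by linarith))
  have htne : t.Nonempty := by
    obtain ⟨x, hx⟩ := hne
    obtain ⟨y, hy, -⟩ := Set.mem_iUnion₂.mp (hcov hx)
    exact ⟨y, hy⟩
  set M0 : ℝ≥0∞ := t.inf' htne (fun y => μ (ball y (r₀ / 2))) with hM0def
  have hM0 : 0 < M0 := by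
    rw [Finset.lt_inf'_iff]
    intro y hy
    exact pos_iff_ne_zero.mpr (htS y hy (r₀ / 2) (by linarith))
  have hmin0 : min M0 1 ≠ 0 := (lt_min hM0 one_pos).ne'
  have hmint : min M0 1 ≠ ⊤ := ne_top_of_le_ne_top ENNReal.one_ne_top (min_le_right _ _)
  refine ⟨(min M0 1).toReal, ENNReal.toReal_pos hmin0 hmint, ?_, ?_⟩
  · calc (min M0 1).toReal ≤ (1 : ℝ≥0∞).toReal :=
        ENNReal.toReal_mono ENNReal.one_ne_top (min_le_right _ _)
    _ = 1 := by simp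
  · intro x hx
    obtain ⟨y, hy, hxy⟩ := Set.mem_iUnion₂.mp (hcov hx)
    have hsub : ball y (r₀ / 2) ⊆ closedBall x r₀ := by
      intro z hz
      rw [mem_ball] at hz hxy
      rw [mem_closedBall]
      have := dist_triangle z y x
      rw [dist_comm x y] at hxy
      linarith
    calc ENNReal.ofReal (min M0 1).toReal = min M0 1 := ENNReal.ofReal_toReal hmint
    _ ≤ M0 := min_le_left _ _
    _ ≤ μ (ball y (r₀ / 2)) := Finset.inf'_le _ hy
    _ ≤ μ (closedBall x r₀) := measure_mono hsub


lemma key2 {X : Type*} [PseudoMetricSpace X] [ProperSpace X] [MeasurableSpace X]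
    (μ : Measure X) [IsLocallyFiniteMeasure μ] (F : Set X) (hF : IsCompact F)
    (hsupp : measSupport μ ⊆ F) {θ a C : ℝ} (hθ0 : 0 < θ) (hθ1 : θ < 1) (hC : 0 < C)
    (H : ∀ x ∈ measSupport μ, ∀ r : ℝ, 0 < r →
      ENNReal.ofReal r < EMetric.diam (measSupport μ) →
      ENNReal.ofReal (C * r ^ a) ≤ μ (Metric.closedBall x r)) :
    ∃ C₂ : ℝ, 0 < C₂ ∧ ∀ x ∈ measSupport μ, ∀ r : ℝ, 0 < r →
      ENNReal.ofReal r < EMetric.diam (measSupport μ) →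
      μ (Metric.closedBall x (r ^ θ)) ≤
        ENNReal.ofReal (C₂ * (r ^ θ / r) ^ (a / (1 - θ))) * μ (Metric.closedBall x r) := by
  have hDtop : EMetric.diam (measSupport μ) ≠ ⊤ :=
    (hF.isBounded.subset hsupp).ediam_ne_top
  set Dr : ℝ := (EMetric.diam (measSupport μ)).toReal with hDr
  set R1 : ℝ := max 1 Dr with hR1
  set K : Set X := cthickening R1 F with hK
  have hKc : IsCompact K := isCompact_of_isClosed_isBounded isClosed_cthickening
    hF.isBounded.cthickening
  have hμK : μ K ≠ ⊤ := hKc.measure_lt_top.ne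
  set M : ℝ := (μ K).toReal + 1 with hM
  have hM0 : 0 < M := by positivity
  have hμKM : μ K ≤ ENNReal.ofReal M := by
    calc μ K = ENNReal.ofReal (μ K).toReal := (ENNReal.ofReal_toReal hμK).symm
    _ ≤ ENNReal.ofReal M := ENNReal.ofReal_le_ofReal (by simp [hM])
  have h1θ : (0:ℝ) < 1 - θ := by linarith
  refine ⟨M / C, by positivity, fun x hx r hr hrD => ?_⟩
  have hrDr : r < Dr := (ENNReal.ofReal_lt_iff_lt_toReal hr.le hDtop).mp hrD
  have hrθ : r ^ θ ≤ R1 := by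
    rcases le_or_gt r 1 with h1 | h1
    · exact le_trans (Real.rpow_le_one hr.le h1 hθ0.le) (le_max_left _ _)
    · calc r ^ θ ≤ r ^ (1:ℝ) := Real.rpow_le_rpow_of_exponent_le h1.le hθ1.le
      _ = r := Real.rpow_one r
      _ ≤ R1 := le_trans hrDr.le (le_max_right _ _)
  have hsub : closedBall x (r ^ θ) ⊆ K := by
    intro z hz
    exact mem_cthickening_of_dist_le z x R1 F (hsupp hx)
      (le_trans (mem_closedBall.mp hz) hrθ)
  have hpow : (r ^ θ / r) ^ (a / (1 - θ)) = (r ^ a)⁻¹ := by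
    rw [show r ^ θ / r = r ^ (θ - 1) by rw [Real.rpow_sub hr, Real.rpow_one],
      ← Real.rpow_mul hr.le]
    rw [show (θ - 1) * (a / (1 - θ)) = -a by field_simp; ring, Real.rpow_neg hr.le]
  have hra : (0:ℝ) < r ^ a := Real.rpow_pos_of_pos hr a
  calc μ (Metric.closedBall x (r ^ θ)) ≤ μ K := measure_mono hsub
  _ ≤ ENNReal.ofReal M := hμKM
  _ = ENNReal.ofReal (M / C * (r ^ θ / r) ^ (a / (1 - θ)) * (C * r ^ a)) := by
      rw [hpow]; congr 1; field_simp
  _ = ENNReal.ofReal (M / C * (r ^ θ / r) ^ (a / (1 - θ))) * ENNReal.ofReal (C * r ^ a) := by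
      rw [ENNReal.ofReal_mul (by positivity)]
  _ ≤ ENNReal.ofReal (M / C * (r ^ θ / r) ^ (a / (1 - θ))) * μ (Metric.closedBall x r) :=
      mul_le_mul_right (H x hx r hr hrD) _


lemma key1 {X : Type*} [PseudoMetricSpace X] [MeasurableSpace X] (μ : Measure X)
    (hS : IsCompact (measSupport μ)) {θ s C ε : ℝ} (hθ0 : 0 < θ) (hθ1 : θ < 1)
    (hs : 0 ≤ s) (hC : 1 ≤ C) (hε : 0 < ε)
    (H : ∀ x ∈ measSupport μ, ∀ r : ℝ, 0 < r →
      ENNReal.ofReal r < EMetric.diam (measSupport μ) →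
      μ (Metric.closedBall x (r ^ θ)) ≤
        ENNReal.ofReal (C * (r ^ θ / r) ^ s) * μ (Metric.closedBall x r)) :
    ∃ C' : ℝ, 0 < C' ∧ ∀ x ∈ measSupport μ, ∀ r : ℝ, 0 < r →
      ENNReal.ofReal r < EMetric.diam (measSupport μ) →
      ENNReal.ofReal (C' * r ^ (s + ε)) ≤ μ (Metric.closedBall x r) := by
  have hC0 : (0:ℝ) < C := by linarith
  by_cases hD0 : EMetric.diam (measSupport μ) = 0
  · refine ⟨1, one_pos, fun x hx r hr hrD => ?_⟩
    rw [hD0] at hrD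
    exact absurd hrD (by simp)
  have hDtop : EMetric.diam (measSupport μ) ≠ ⊤ := hS.isBounded.ediam_ne_top
  set Dr : ℝ := (EMetric.diam (measSupport μ)).toReal with hDrdef
  have hDr : 0 < Dr := ENNReal.toReal_pos hD0 hDtop
  set r₀ : ℝ := min 1 Dr / 2 with hr₀def
  have hr₀0 : 0 < r₀ := by
    have := lt_min one_pos hDr; positivity
  have hr₀1 : r₀ < 1 := by
    have : min 1 Dr ≤ 1 := min_le_left _ _
    rw [hr₀def]; linarith
  have hr₀Dr : r₀ < Dr := by
    have : min 1 Dr ≤ Dr := min_le_right _ _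
    rw [hr₀def]; linarith
  have hr₀D : ENNReal.ofReal r₀ < EMetric.diam (measSupport μ) := by
    rw [ENNReal.ofReal_lt_iff_lt_toReal hr₀0.le hDtop]; exact hr₀Dr
  obtain ⟨m, hm0, hm1, hm⟩ := exists_uniform_mass hS hr₀0
  -- the scale sequence
  have hq : (1:ℝ) < 1 / θ := one_lt_one_div hθ0 hθ1
  set e : ℕ → ℝ := fun n => (1 / θ) ^ n with hedef
  set rs : ℕ → ℝ := fun n => r₀ ^ e n with hrsdef
  have he1 : ∀ n, 1 ≤ e n := fun n => one_le_pow₀ hq.le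
  have hrs_pos : ∀ n, 0 < rs n := fun n => Real.rpow_pos_of_pos hr₀0 _
  have hrs_le : ∀ n, rs n ≤ r₀ := by
    intro n
    have := Real.rpow_le_rpow_of_exponent_ge hr₀0 hr₀1.le (he1 n)
    rwa [Real.rpow_one] at this
  have hrs_lt1 : ∀ n, rs n < 1 := fun n => lt_of_le_of_lt (hrs_le n) hr₀1
  have hrs0 : rs 0 = r₀ := by simp [hrsdef, hedef]
  have hstep : ∀ n, (rs (n + 1)) ^ θ = rs n := by
    intro n
    show (r₀ ^ e (n + 1)) ^ θ = r₀ ^ e n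
    rw [← Real.rpow_mul hr₀0.le]
    congr 1
    rw [hedef]
    show (1 / θ) ^ (n + 1) * θ = (1 / θ) ^ n
    rw [pow_succ]
    field_simp
  -- main induction
  have P : ∀ n : ℕ, ∀ x ∈ measSupport μ, ∀ r : ℝ, rs n ≤ r → r < 1 →
      ENNReal.ofReal (m * r ^ s / C ^ n) ≤ μ (closedBall x r) := by
    intro n
    induction n with
    | zero =>
      intro x hx r hr1 hr2
      have hr0 : 0 < r := lt_of_lt_of_le (hrs_pos 0) hr1
      rw [hrs0] at hr1
      calc ENNReal.ofReal (m * r ^ s / C ^ 0) ≤ ENNReal.ofReal m := by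
            apply ENNReal.ofReal_le_ofReal
            rw [pow_zero, div_one]
            nlinarith [Real.rpow_le_one hr0.le hr2.le hs, Real.rpow_nonneg hr0.le s]
      _ ≤ μ (closedBall x r₀) := hm x hx
      _ ≤ μ (closedBall x r) := measure_mono (closedBall_subset_closedBall hr1)
    | succ n ih =>
      intro x hx r hr1 hr2
      have hr0 : 0 < r := lt_of_lt_of_le (hrs_pos _) hr1
      by_cases hcase : rs n ≤ r
      · refine le_trans (ENNReal.ofReal_le_ofReal ?_) (ih x hx r hcase hr2)
        have h1 : (0:ℝ) < C ^ n := by positivity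
        have h2 : C ^ n ≤ C ^ (n + 1) := pow_le_pow_right₀ hC (by omega)
        have h3 : (0:ℝ) ≤ m * r ^ s := by positivity
        gcongr
      · push_neg at hcase
        have hrθ1 : r ^ θ < 1 := Real.rpow_lt_one hr0.le hr2 hθ0
        have hrθge : rs n ≤ r ^ θ := by
          calc rs n = (rs (n + 1)) ^ θ := (hstep n).symm
          _ ≤ r ^ θ := Real.rpow_le_rpow (hrs_pos _).le hr1 hθ0.le
        have hprev := ih x hx (r ^ θ) hrθge hrθ1
        have hrD : ENNReal.ofReal r < EMetric.diam (measSupport μ) :=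
          lt_of_le_of_lt (ENNReal.ofReal_le_ofReal (hcase.le.trans (hrs_le n))) hr₀D
        have hbase : ENNReal.ofReal (m * (r ^ θ) ^ s / C ^ n) ≤
            ENNReal.ofReal (C * (r ^ θ / r) ^ s) * μ (closedBall x r) :=
          hprev.trans (H x hx r hr0 hrD)
        have hKpos : (0:ℝ) < C * (r ^ θ / r) ^ s := by positivity
        have h2 : ENNReal.ofReal (m * (r ^ θ) ^ s / C ^ n) /
            ENNReal.ofReal (C * (r ^ θ / r) ^ s) ≤ μ (closedBall x r) := by
          rw [ENNReal.div_le_iff_le_mul (Or.inl (ENNReal.ofReal_pos.mpr hKpos).ne')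
            (Or.inl ENNReal.ofReal_ne_top)]
          exact hbase.trans (le_of_eq (mul_comm _ _))
        refine le_trans ?_ h2
        rw [← ENNReal.ofReal_div_of_pos hKpos]
        apply ENNReal.ofReal_le_ofReal
        have hdiv : (r ^ θ / r) ^ s = (r ^ θ) ^ s / r ^ s :=
          Real.div_rpow (Real.rpow_nonneg hr0.le θ) hr0.le s
        rw [hdiv]
        have hps : (0:ℝ) < r ^ s := Real.rpow_pos_of_pos hr0 s
        have hpθs : (0:ℝ) < (r ^ θ) ^ s := Real.rpow_pos_of_pos (Real.rpow_pos_of_pos hr0 θ) s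
        rw [pow_succ]
        field_simp
        ring_nf
        exact le_refl _
  -- existence of a scale index for every r
  have hfind : ∀ r : ℝ, 0 < r → ∃ n, rs n ≤ r := by
    intro r hr
    rcases le_or_gt r₀ r with h | h
    · exact ⟨0, hrs0 ▸ h⟩
    · set a : ℝ := 1 / θ - 1 with hadef
      have ha0 : 0 < a := by rw [hadef]; linarith
      obtain ⟨n, hn⟩ := exists_nat_ge (Real.log r / Real.log r₀ / a)
      refine ⟨n, ?_⟩
      have hlogr₀ : Real.log r₀ < 0 := Real.log_neg hr₀0 hr₀1
      have hT : Real.log r / Real.log r₀ ≤ e n := by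
        have h1 : Real.log r / Real.log r₀ ≤ n * a := by
          rw [div_le_iff₀ ha0] at hn
          linarith
        have h2 : 1 + (n : ℝ) * a ≤ (1 + a) ^ n :=
          one_add_mul_le_pow (by linarith) n
        have h3 : (1:ℝ) + a = 1 / θ := by rw [hadef]; ring
        rw [h3] at h2
        calc Real.log r / Real.log r₀ ≤ n * a := h1
        _ ≤ 1 + n * a := by linarith
        _ ≤ e n := h2
      have hle : e n * Real.log r₀ ≤ Real.log r := by
        rw [div_le_iff_of_neg hlogr₀] at hT
        linarith
      calc rs n = Real.exp (Real.log r₀ * e n) := Real.rpow_def_of_pos hr₀0 _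
      _ ≤ Real.exp (Real.log r) := Real.exp_le_exp.mpr (by linarith [mul_comm (Real.log r₀) (e n)])
      _ = r := Real.exp_log hr
  -- the geometric correction sequence is bounded
  have hlog1r₀ : 0 < Real.log (1 / r₀) := Real.log_pos (by rw [lt_div_iff₀ hr₀0]; linarith)
  have hlogC : 0 ≤ Real.log C := Real.log_nonneg hC
  set δ : ℝ := ε * Real.log (1 / r₀) / (Real.log C + 1) with hδdef
  have hδ0 : 0 < δ := by rw [hδdef]; positivity
  have htend : Tendsto (fun n : ℕ => ((n : ℝ) + 1) * θ ^ n) atTop (𝓝 0) := by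
    have h1 := tendsto_pow_const_mul_const_pow_of_abs_lt_one 1
      (by rw [abs_of_pos hθ0]; exact hθ1)
    have h2 := tendsto_pow_atTop_nhds_zero_of_lt_one hθ0.le hθ1
    have := h1.add h2
    simp only [pow_one, add_zero] at this
    convert this using 2 with n
    ring
  obtain ⟨N, hN⟩ := eventually_atTop.mp (htend.eventually (gt_mem_nhds hδ0))
  set g : ℕ → ℝ := fun k => C ^ (k + 1) * rs k ^ ε with hgdef
  have hgpos : ∀ k, 0 < g k := by
    intro k
    have := hrs_pos k
    have := Real.rpow_pos_of_pos (hrs_pos k) ε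
    positivity
  have hgN : ∀ k, N ≤ k → g k ≤ 1 := by
    intro k hk
    have hNk := hN k hk
    have hek : 0 < e k := by have := he1 k; linarith
    have hmul : ((k : ℝ) + 1) ≤ δ * e k := by
      have h1 : ((k : ℝ) + 1) * θ ^ k * e k ≤ δ * e k :=
        mul_le_mul_of_nonneg_right hNk.le hek.le
      have h2 : θ ^ k * e k = 1 := by
        rw [hedef]
        show θ ^ k * (1 / θ) ^ k = 1
        rw [← mul_pow]
        rw [mul_one_div, div_self hθ0.ne', one_pow]
      calc ((k : ℝ) + 1) = ((k : ℝ) + 1) * (θ ^ k * e k) := by rw [h2, mul_one]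
      _ = ((k : ℝ) + 1) * θ ^ k * e k := by ring
      _ ≤ δ * e k := h1
    have hexp : ((k : ℝ) + 1) * Real.log C + ε * (e k * Real.log r₀) ≤ 0 := by
      have h3 : ((k : ℝ) + 1) * Real.log C ≤ δ * e k * (Real.log C + 1) := by
        nlinarith
      have h4 : δ * e k * (Real.log C + 1) = ε * Real.log (1 / r₀) * e k := by
        rw [hδdef]; field_simp
      have h5 : Real.log (1 / r₀) = -Real.log r₀ := by
        rw [one_div, Real.log_inv]
      rw [h4, h5] at h3
      nlinarith
    have hlg : Real.log (g k) ≤ 0 := by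
      rw [hgdef]
      show Real.log (C ^ (k + 1) * rs k ^ ε) ≤ 0
      rw [Real.log_mul (by positivity) (by positivity : rs k ^ ε ≠ 0)]
      rw [Real.log_pow, Real.log_rpow (hrs_pos k)]
      rw [hrsdef]
      show (↑(k + 1)) * Real.log C + ε * Real.log (r₀ ^ e k) ≤ 0
      rw [Real.rpow_def_of_pos hr₀0, Real.log_exp]
      push_cast
      calc ((k : ℝ) + 1) * Real.log C + ε * (Real.log r₀ * e k)
          = ((k : ℝ) + 1) * Real.log C + ε * (e k * Real.log r₀) := by ring
      _ ≤ 0 := hexp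
    calc g k = Real.exp (Real.log (g k)) := (Real.exp_log (hgpos k)).symm
    _ ≤ Real.exp 0 := Real.exp_le_exp.mpr hlg
    _ = 1 := Real.exp_zero
  set G : ℝ := 1 + ∑ k ∈ Finset.range N, g k with hGdef
  have hG1 : 1 ≤ G := by
    rw [hGdef]
    have : 0 ≤ ∑ k ∈ Finset.range N, g k :=
      Finset.sum_nonneg fun k _ => (hgpos k).le
    linarith
  have hG0 : 0 < G := by linarith
  have hgG : ∀ k, g k ≤ G := by
    intro k
    rcases lt_or_ge k N with hk | hk
    · have := Finset.single_le_sum (f := g) (fun i _ => (hgpos i).le)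
        (Finset.mem_range.mpr hk)
      rw [hGdef]; linarith
    · exact (hgN k hk).trans hG1
  -- assemble the constant
  set R1 : ℝ := max 1 Dr with hR1def
  have hR10 : 0 < R1 := lt_of_lt_of_le one_pos (le_max_left _ _)
  set C2 : ℝ := m / R1 ^ (s + ε) with hC2def
  have hC20 : 0 < C2 := div_pos hm0 (Real.rpow_pos_of_pos hR10 (s + ε))
  clear_value Dr r₀ e rs δ g G R1 C2
  refine ⟨min (m / G) C2, lt_min (div_pos hm0 hG0) hC20, ?_⟩
  intro x hx r hr hrD
  have hrDr : r < Dr := by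
    rw [hDrdef]; exact (ENNReal.ofReal_lt_iff_lt_toReal hr.le hDtop).mp hrD
  rcases lt_or_ge r r₀ with hsmall | hlarge
  · -- small radii regime
    have hex := hfind r hr
    set n : ℕ := Nat.find hex with hndef
    have hnspec : rs n ≤ r := Nat.find_spec hex
    have hn0 : n ≠ 0 := by
      intro h0
      rw [h0, hrs0] at hnspec
      linarith
    obtain ⟨k, hk⟩ := Nat.exists_eq_succ_of_ne_zero hn0
    have hmin : r < rs k := by
      by_contra hcon
      push_neg at hcon
      exact Nat.find_min hex (by omega : k < n) hcon
    clear_value n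
    have hP := P n x hx r hnspec (hsmall.trans hr₀1)
    refine le_trans (ENNReal.ofReal_le_ofReal ?_) hP
    rw [hk, Real.rpow_add hr]
    have hre : r ^ ε ≤ rs k ^ ε := Real.rpow_le_rpow hr.le hmin.le hε.le
    have hrs' : 0 ≤ r ^ s := Real.rpow_nonneg hr.le s
    have hCk : (0:ℝ) < C ^ (k + 1) := by positivity
    have hgk := hgG k
    rw [hgdef] at hgk
    -- min (m/G) C2 * (r^s * r^ε) ≤ m * r^s / C^(k+1)
    have hle1 : min (m / G) C2 * (r ^ s * r ^ ε) ≤ m / G * (r ^ s * rs k ^ ε) := by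
      have h1 : min (m / G) C2 ≤ m / G := min_le_left _ _
      have h2 : r ^ s * r ^ ε ≤ r ^ s * rs k ^ ε :=
        mul_le_mul_of_nonneg_left hre hrs'
      have h3 : 0 ≤ r ^ s * r ^ ε := by positivity
      have h4 : (0:ℝ) < m / G := div_pos hm0 hG0
      exact mul_le_mul h1 h2 h3 h4.le
    refine hle1.trans ?_
    rw [div_mul_eq_mul_div, div_le_div_iff₀ hG0 hCk]
    calc m * (r ^ s * rs k ^ ε) * C ^ (k + 1)
        = m * r ^ s * (C ^ (k + 1) * rs k ^ ε) := by ring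
    _ ≤ m * r ^ s * G :=
        mul_le_mul_of_nonneg_left hgk (by positivity)
  · -- large radii regime
    have h1 := hm x hx
    refine le_trans (ENNReal.ofReal_le_ofReal ?_)
      (h1.trans (measure_mono (closedBall_subset_closedBall hlarge)))
    have hrR1 : r ≤ R1 := le_trans hrDr.le (hR1def ▸ le_max_right 1 Dr)
    have h2 : r ^ (s + ε) ≤ R1 ^ (s + ε) := Real.rpow_le_rpow hr.le hrR1 (by linarith)
    have hR1p : (0:ℝ) < R1 ^ (s + ε) := Real.rpow_pos_of_pos hR10 _
    calc min (m / G) C2 * r ^ (s + ε) ≤ C2 * R1 ^ (s + ε) := by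
          have h6 := min_le_right (m / G) C2
          have h5 : 0 ≤ r ^ (s + ε) := Real.rpow_nonneg hr.le _
          exact mul_le_mul h6 h2 h5 hC20.le
    _ = m := by rw [hC2def]; field_simp

end AuxLemmas

/-- For a measure `μ` supported on a compact set `F ⊆ ℝ^d` and `θ ∈ (0,1)`,
`(upper box dimension of μ) ≤ dim_A^θ μ ≤ (upper box dimension of μ)/(1-θ)`. -/
theorem measUpperBoxDim_le_measAssouadSpectrum (d : ℕ)
    (μ : Measure (EuclideanSpace ℝ (Fin d))) [IsLocallyFiniteMeasure μ]
    (F : Set (EuclideanSpace ℝ (Fin d))) (hF : IsCompact F) (hsupp : measSupport μ ⊆ F)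
    (θ : ℝ) (hθ : θ ∈ Set.Ioo (0 : ℝ) 1) :
    measUpperBoxDim μ ≤ measAssouadSpectrum μ θ ∧
      measAssouadSpectrum μ θ ≤ measUpperBoxDim μ / (1 - θ) := by
  obtain ⟨hθ0, hθ1⟩ := hθ
  have h1θ : (0:ℝ) < 1 - θ := by linarith
  set SB : Set ℝ := {a : ℝ | 0 ≤ a ∧ ∃ C : ℝ, 0 < C ∧ ∀ x ∈ measSupport μ, ∀ r : ℝ, 0 < r →
    ENNReal.ofReal r < EMetric.diam (measSupport μ) →
    ENNReal.ofReal (C * r ^ a) ≤ μ (Metric.closedBall x r)} with hSB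
  set SA : Set ℝ := {s : ℝ | 0 ≤ s ∧ ∃ C : ℝ, 0 < C ∧ ∀ x ∈ measSupport μ, ∀ r : ℝ, 0 < r →
    ENNReal.ofReal r < EMetric.diam (measSupport μ) →
    μ (Metric.closedBall x (r ^ θ)) ≤
      ENNReal.ofReal (C * (r ^ θ / r) ^ s) * μ (Metric.closedBall x r)} with hSA
  have hbox : measUpperBoxDim μ = sInf SB := rfl
  have hspec : measAssouadSpectrum μ θ = sInf SA := rfl
  have hBddB : BddBelow SB := ⟨0, fun b hb => hb.1⟩
  have hBddA : BddBelow SA := ⟨0, fun a ha => ha.1⟩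
  have hScpt : IsCompact (measSupport μ) :=
    hF.of_isClosed_subset (isClosed_measSupport μ) hsupp
  have KeyBA : ∀ b ∈ SB, b / (1 - θ) ∈ SA := by
    rintro b ⟨hb0, C, hC, H⟩
    obtain ⟨C₂, hC₂, h⟩ := key2 μ F hF hsupp hθ0 hθ1 hC H
    exact ⟨div_nonneg hb0 h1θ.le, C₂, hC₂, h⟩
  have KeyAB : ∀ s ∈ SA, ∀ ε : ℝ, 0 < ε → s + ε ∈ SB := by
    rintro s ⟨hs0, C, hC, H⟩ ε hε
    have H' : ∀ x ∈ measSupport μ, ∀ r : ℝ, 0 < r →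
        ENNReal.ofReal r < EMetric.diam (measSupport μ) →
        μ (Metric.closedBall x (r ^ θ)) ≤
          ENNReal.ofReal ((C + 1) * (r ^ θ / r) ^ s) * μ (Metric.closedBall x r) := by
      intro x hx r hr hrD
      refine (H x hx r hr hrD).trans (mul_le_mul_left (ENNReal.ofReal_le_ofReal ?_) _)
      have h0 : (0:ℝ) ≤ (r ^ θ / r) ^ s :=
        Real.rpow_nonneg (by positivity) s
      nlinarith
    obtain ⟨C', hC', h⟩ := key1 μ hScpt hθ0 hθ1 hs0 (by linarith : 1 ≤ C + 1) hε H'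
    exact ⟨by positivity, C', hC', h⟩
  rcases Set.eq_empty_or_nonempty SA with hAe | ⟨s₀, hs₀⟩
  · have hBe : SB = ∅ := by
      rw [Set.eq_empty_iff_forall_notMem]
      intro b hb
      have := KeyBA b hb
      rw [hAe] at this
      exact this
    rw [hbox, hspec, hAe, hBe, Real.sInf_empty]
    norm_num
  · have hBne : SB.Nonempty := ⟨s₀ + 1, KeyAB s₀ hs₀ 1 one_pos⟩
    constructor
    · rw [hbox, hspec]
      refine le_csInf ⟨s₀, hs₀⟩ (fun s hsmem => ?_)
      refine le_of_forall_pos_le_add (fun ε hε => ?_)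
      exact csInf_le hBddB (KeyAB s hsmem ε hε)
    · rw [hbox, hspec, le_div_iff₀ h1θ]
      refine le_csInf hBne (fun b hb => ?_)
      have h := csInf_le hBddA (KeyBA b hb)
      calc sInf SA * (1 - θ) ≤ b / (1 - θ) * (1 - θ) :=
            mul_le_mul_of_nonneg_right h h1θ.le
      _ = b := div_mul_cancel₀ b h1θ.ne'
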